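/- Fix m ≥ 2 and let H = {x ∈ ℝ^{m+1} : Σ_{i=0}^{m} x_i = 0}, an m-dimensional real inner product space with the inner product inherited from the standard Euclidean inner product on ℝ^{m+1}. Then there exists a nonzero real number λ such that the symmetric trilinear form on H defined by τ(x,y,z) = λ · Σ_{i=0}^{m} x_i y_i z_i is traceless and satisfies the superconformal identity. Moreover, this τ is invariant under all the linear isometries of H induced by permutations of the coordinates of ℝ^{m+1}. -/

import Mathlib

open scoped BigOperators RealInnerProductSpace

noncomputable section

/-- The hyperplane `{x ∈ ℝ^{m+1} : ∑ xᵢ = 0}`, as a submodule of Euclidean space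
(hence inheriting the standard inner product). -/
def zeroSumHyperplane (m : ℕ) : Submodule ℝ (EuclideanSpace ℝ (Fin (m + 1))) where
  carrier := {x | ∑ i, x i = 0}
  add_mem' := by
    intro a b ha hb
    simp only [Set.mem_setOf_eq, PiLp.add_apply] at *
    rw [Finset.sum_add_distrib, ha, hb, add_zero]
  zero_mem' := by
    simp only [Set.mem_setOf_eq, PiLp.zero_apply, Finset.sum_const_zero]
  smul_mem' := by
    intro c a ha
    simp only [Set.mem_setOf_eq, PiLp.smul_apply, smul_eq_mul] at *
    rw [← Finset.mul_sum, ha, mul_zero]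

/-- The symmetric trilinear "coordinate cube" form `(x,y,z) ↦ ∑ᵢ xᵢ yᵢ zᵢ` on the
zero-sum hyperplane. -/
def cubeForm (m : ℕ) (x y z : zeroSumHyperplane m) : ℝ :=
  ∑ i, (x : EuclideanSpace ℝ (Fin (m + 1))) i * (y : EuclideanSpace ℝ (Fin (m + 1))) i *
    (z : EuclideanSpace ℝ (Fin (m + 1))) i

/-- The linear isometry of the zero-sum hyperplane induced by a permutation `σ` of the
coordinates of `ℝ^{m+1}`, sending `x` to `i ↦ x (σ i)`. -/
def permOnHyperplane (m : ℕ) (σ : Equiv.Perm (Fin (m + 1)))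
    (x : zeroSumHyperplane m) : zeroSumHyperplane m :=
  ⟨(WithLp.toLp 2 (fun i => (x : EuclideanSpace ℝ (Fin (m + 1))) (σ i)) : EuclideanSpace ℝ (Fin (m + 1))),
    by
      have hx : ∑ i, (x : EuclideanSpace ℝ (Fin (m + 1))) i = 0 := x.2
      show ∑ i, (x : EuclideanSpace ℝ (Fin (m + 1))) (σ i) = 0
      rw [Equiv.sum_comp σ]
      exact hx⟩

/- ### Auxiliary material -/

abbrev Emsp (m : ℕ) := EuclideanSpace ℝ (Fin (m + 1))

lemma inner_eq {m : ℕ} (x y : zeroSumHyperplane m) :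
    ⟪x, y⟫ = ∑ i, (x : Emsp m) i * (y : Emsp m) i := by
  rw [Submodule.coe_inner]
  simp [PiLp.inner_apply, RCLike.inner_apply, conj_trivial]
  exact Finset.sum_congr rfl fun i _ => mul_comm _ _

def uvec (m : ℕ) (i : Fin (m + 1)) : zeroSumHyperplane m :=
  ⟨(WithLp.toLp 2 (fun k => ((if k = i then 1 else 0) - 1 / (m + 1) : ℝ)) : Emsp m), by
    show ∑ k, ((if k = i then (1:ℝ) else 0) - 1 / (m + 1)) = 0
    rw [Finset.sum_sub_distrib]
    have h1 : ∑ k : Fin (m+1), (if k = i then (1:ℝ) else 0) = 1 := by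
      simp
    have h2 : ∑ _k : Fin (m+1), (1:ℝ) / (m + 1) = 1 := by
      rw [Finset.sum_const, Finset.card_fin, nsmul_eq_mul]
      push_cast
      field_simp
    rw [h1, h2, sub_self]⟩

lemma inner_uvec {m : ℕ} (x : zeroSumHyperplane m) (i : Fin (m + 1)) :
    ⟪x, uvec m i⟫ = (x : Emsp m) i := by
  rw [inner_eq]
  have hx : ∑ k, (x : Emsp m) k = 0 := x.2
  have : ∀ k, (x : Emsp m) k * ((uvec m i : Emsp m) k)
      = (if i = k then (x : Emsp m) k else 0) - (x : Emsp m) k * (1/(m+1)) := by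
    intro k
    show (x : Emsp m) k * ((if k = i then (1:ℝ) else 0) - 1/(m+1)) = _
    rcases eq_or_ne k i with h | h
    · simp [h]; ring
    · simp [h, Ne.symm h]
  simp_rw [this]
  rw [Finset.sum_sub_distrib, Finset.sum_ite_eq, ← Finset.sum_mul, hx]
  simp

lemma uvec_apply {m : ℕ} (i k : Fin (m + 1)) :
    (uvec m i : Emsp m) k = (if k = i then 1 else 0) - 1 / (m + 1) := rfl

lemma sum_coord_mul {m : ℕ} (b : OrthonormalBasis (Fin m) ℝ (zeroSumHyperplane m))
    (i j : Fin (m + 1)) :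
    ∑ r, (b r : Emsp m) i * (b r : Emsp m) j
      = (if i = j then (1:ℝ) else 0) - 1 / (m + 1) := by
  have h := b.sum_inner_mul_inner (uvec m i) (uvec m j)
  have h1 : ∀ r, ⟪uvec m i, b r⟫ = (b r : Emsp m) i := by
    intro r; rw [real_inner_comm]; exact inner_uvec _ _
  have h2 : ∀ r, ⟪b r, uvec m j⟫ = (b r : Emsp m) j := fun r => inner_uvec _ _
  have h3 : ⟪uvec m i, uvec m j⟫ = (if i = j then (1:ℝ) else 0) - 1 / (m + 1) := by
    rw [real_inner_comm, inner_uvec, uvec_apply]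
  simp_rw [h1, h2] at h
  rw [h, h3]

lemma cube_sum {m : ℕ} (b : OrthonormalBasis (Fin m) ℝ (zeroSumHyperplane m))
    (p s q t : zeroSumHyperplane m) :
    ∑ r : Fin m, cubeForm m (b r) p s * cubeForm m (b r) q t
      = (∑ i, (p : Emsp m) i * (s : Emsp m) i * ((q : Emsp m) i * (t : Emsp m) i))
        - (1 / (m + 1)) * ((∑ i, (p : Emsp m) i * (s : Emsp m) i)
            * (∑ i, (q : Emsp m) i * (t : Emsp m) i)) := by
  unfold cubeForm
  simp_rw [Finset.sum_mul_sum]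
  rw [Finset.sum_comm]
  have step1 : ∀ i : Fin (m+1),
      ∑ r : Fin m, ∑ j, ((b r : Emsp m) i * (p : Emsp m) i * (s : Emsp m) i)
        * ((b r : Emsp m) j * (q : Emsp m) j * (t : Emsp m) j)
      = ∑ j, (((if i = j then (1:ℝ) else 0) - 1/(m+1))
          * ((p : Emsp m) i * (s : Emsp m) i * ((q : Emsp m) j * (t : Emsp m) j))) := by
    intro i
    rw [Finset.sum_comm]
    refine Finset.sum_congr rfl fun j _ => ?_
    rw [← sum_coord_mul b i j, Finset.sum_mul]
    exact Finset.sum_congr rfl fun r _ => by ring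
  simp_rw [step1, sub_mul, Finset.sum_sub_distrib]
  congr 1
  · refine Finset.sum_congr rfl fun i _ => ?_
    simp [ite_mul, Finset.sum_ite_eq]
  · simp_rw [Finset.mul_sum]

lemma trace_sum {m : ℕ} (b : OrthonormalBasis (Fin m) ℝ (zeroSumHyperplane m))
    (y : zeroSumHyperplane m) :
    ∑ r : Fin m, cubeForm m (b r) (b r) y = 0 := by
  unfold cubeForm
  rw [Finset.sum_comm]
  have : ∀ i : Fin (m+1), ∑ r : Fin m, (b r : Emsp m) i * (b r : Emsp m) i * (y : Emsp m) i
      = (1 - 1/(m+1)) * (y : Emsp m) i := by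
    intro i
    rw [← Finset.sum_mul, sum_coord_mul b i i]
    simp
  simp_rw [this]
  rw [← Finset.mul_sum]
  have hy : ∑ i, (y : Emsp m) i = 0 := y.2
  rw [hy, mul_zero]

/-- for some nonzero `λ`, the trilinear form
`τ(x,y,z) = λ ∑ᵢ xᵢ yᵢ zᵢ` on the zero-sum hyperplane `H ⊂ ℝ^{m+1}` is traceless and
satisfies the superconformal identity (with respect to any orthonormal basis of `H`),
and it is invariant under all coordinate permutations. -/
theorem exists_superconformal_cubeForm (m : ℕ) (hm : 2 ≤ m) :
    ∃ lam : ℝ, lam ≠ 0 ∧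
      (∀ b : OrthonormalBasis (Fin m) ℝ (zeroSumHyperplane m),
        (∀ y : zeroSumHyperplane m, ∑ r : Fin m, lam * cubeForm m (b r) (b r) y = 0) ∧
        (∀ p q s t : zeroSumHyperplane m,
          ∑ r : Fin m,
            ((lam * cubeForm m (b r) p s) * (lam * cubeForm m (b r) q t)
              - (lam * cubeForm m (b r) p t) * (lam * cubeForm m (b r) q s))
          = -(⟪p, s⟫ * ⟪q, t⟫ - ⟪p, t⟫ * ⟪q, s⟫))) ∧
      (∀ σ : Equiv.Perm (Fin (m + 1)), ∀ x y z : zeroSumHyperplane m,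
        cubeForm m (permOnHyperplane m σ x) (permOnHyperplane m σ y)
          (permOnHyperplane m σ z) = cubeForm m x y z) := by
  have hpos : (0:ℝ) < (m:ℝ) + 1 := by positivity
  refine ⟨Real.sqrt ((m:ℝ) + 1), ?_, fun b => ⟨?_, ?_⟩, ?_⟩
  · exact ne_of_gt (Real.sqrt_pos.mpr hpos)
  · intro y
    rw [← Finset.mul_sum, trace_sum b y, mul_zero]
  · intro p q s t
    set lam := Real.sqrt ((m:ℝ) + 1) with hlam
    have hsq : lam * lam = (m:ℝ) + 1 := Real.mul_self_sqrt (le_of_lt hpos)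
    have hre : ∀ r : Fin m,
        (lam * cubeForm m (b r) p s) * (lam * cubeForm m (b r) q t)
          - (lam * cubeForm m (b r) p t) * (lam * cubeForm m (b r) q s)
        = (lam * lam) * (cubeForm m (b r) p s * cubeForm m (b r) q t)
          - (lam * lam) * (cubeForm m (b r) p t * cubeForm m (b r) q s) := by
      intro r; ring
    simp_rw [hre]
    rw [Finset.sum_sub_distrib, ← Finset.mul_sum, ← Finset.mul_sum,
      cube_sum b p s q t, cube_sum b p t q s]
    have e1 : (∑ i, (p : Emsp m) i * (s : Emsp m) i * ((q : Emsp m) i * (t : Emsp m) i))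
        = (∑ i, (p : Emsp m) i * (t : Emsp m) i * ((q : Emsp m) i * (s : Emsp m) i)) :=
      Finset.sum_congr rfl fun i _ => by ring
    rw [inner_eq p s, inner_eq q t, inner_eq p t, inner_eq q s, e1]
    have hne : (m:ℝ) + 1 ≠ 0 := ne_of_gt hpos
    field_simp [hsq]
    rw [sq, hsq]; ring
  · intro σ x y z
    unfold cubeForm
    show ∑ i, (x : Emsp m) (σ i) * (y : Emsp m) (σ i) * (z : Emsp m) (σ i) = _
    exact Equiv.sum_comp σ (fun i => (x : Emsp m) i * (y : Emsp m) i * (z : Emsp m) i)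

end
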